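/- Let 𝒳 and 𝒰 be finite nonempty sets and T a positive integer. Given, for each k ∈ 1:T, system transition pmfs f_{x,k}(·|x,u) on 𝒳, reference transition pmfs g_{x,k}(·|x,u) on 𝒳 with full support, reference policies g_{u,k}(·|x) on 𝒰 with full support, and a shared prior f_0 = g_0 on 𝒳. Define backward γ_T(x) := 1 and, for k = T-1 down to 0, γ_k(x) := Σ_{u ∈ 𝒰} g_{u,k+1}(u|x) exp( -D_KL(f_{x,k+1}(·|x,u) || g_{x,k+1}(·|x,u)) + Σ_{x'} f_{x,k+1}(x'|x,u) ln γ_{k+1}(x') ), and set ω̂_k(u, x) := D_KL(f_{x,k}(·|x,u) || g_{x,k}(·|x,u)) - Σ_{x'} f_{x,k}(x'|x,u) ln γ_k(x'). Then γ_k(x) > 0 for all k and x, for each k and x the function f*_{u,k}(u|x) := g_{u,k}(u|x) e^{-ω̂_k(u,x)} / γ_{k-1}(x) is a pmf on 𝒰, and the policy sequence {f*_{u,k}}_{k ∈ 1:T} minimizes D_KL(f || g) over all policy sequences {f_{u,k}}_{k ∈ 1:T}, where f := f_0(x_0) ∏_{k=1}^{T} f_{x,k}(x_k|x_{k-1},u_k)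 f_{u,k}(u_k|x_{k-1}) and g := g_0(x_0) ∏_{k=1}^{T} g_{x,k}(x_k|x_{k-1},u_k) g_{u,k}(u_k|x_{k-1}) are the joint trajectory pmfs on 𝒳 × (𝒰 × 𝒳)^T; moreover the minimum value equals -Σ_{x_0 ∈ 𝒳} f_0(x_0) ln γ_0(x_0). -/

import Mathlib

/-- Kullback–Leibler divergence between two pmfs on a finite set:
`D_KL(f||g) = ∑_{s : f s > 0} f s * ln (f s / g s)`. -/
noncomputable def KL {α : Type} [Fintype α] (f g : α → ℝ) : ℝ :=
  ∑ a, if 0 < f a then f a * Real.log (f a / g a) else 0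

/-- Backward FPD recursion, reparametrized: `gamAux T fx gx gu m = γ_{T - m}`, so that
`gamAux ... 0 = γ_T = 1` and, for `k = T - (m+1)`,
`γ_k(x) = ∑ u, g_{u,k+1}(u|x) * exp(-D_KL(f_{x,k+1}(·|x,u)||g_{x,k+1}(·|x,u))
  + ∑ x', f_{x,k+1}(x'|x,u) ln γ_{k+1}(x'))` (note `k + 1 = T - m`). -/
noncomputable def gamAux {𝒳 𝒰 : Type} [Fintype 𝒳] [Fintype 𝒰] (T : ℕ)
    (fx gx : ℕ → 𝒳 → 𝒰 → 𝒳 → ℝ) (gu : ℕ → 𝒳 → 𝒰 → ℝ) : ℕ → 𝒳 → ℝ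
  | 0 => fun _ => 1
  | m + 1 => fun x => ∑ u, gu (T - m) x u *
      Real.exp (-(KL (fx (T - m) x u) (gx (T - m) x u)) +
        ∑ x', fx (T - m) x u x' * Real.log (gamAux T fx gx gu m x'))

open Finset in
lemma gamAux_pos {𝒳 𝒰 : Type} [Fintype 𝒳] [Fintype 𝒰] [Nonempty 𝒳] [Nonempty 𝒰]
    {T : ℕ} {fx gx : ℕ → 𝒳 → 𝒰 → 𝒳 → ℝ} {gu : ℕ → 𝒳 → 𝒰 → ℝ}
    (hgu : ∀ k x u, 0 < gu k x u) : ∀ m x, 0 < gamAux T fx gx gu m x := by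
  intro m
  induction m with
  | zero => intro x; simp [gamAux]
  | succ m ih =>
    intro x
    apply Finset.sum_pos (fun u _ => mul_pos (hgu _ _ _) (Real.exp_pos _))
      Finset.univ_nonempty

lemma gamAux_shift {𝒳 𝒰 : Type} [Fintype 𝒳] [Fintype 𝒰]
    {T : ℕ} {fx gx : ℕ → 𝒳 → 𝒰 → 𝒳 → ℝ} {gu : ℕ → 𝒳 → 𝒰 → ℝ} :
    ∀ m, m ≤ T + 1 →
      gamAux T (fun k => fx (k + 1)) (fun k => gx (k + 1)) (fun k => gu (k + 1)) m
        = gamAux (T + 1) fx gx gu m := by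
  intro m
  induction m with
  | zero => intro _; rfl
  | succ m ih =>
    intro hm
    have h1 : T - m + 1 = T + 1 - m := by omega
    funext x
    simp only [gamAux, ih (by omega), h1]

lemma gibbs {α : Type} [Fintype α] [Nonempty α] (p q : α → ℝ)
    (hp : ∀ a, 0 ≤ p a) (hp1 : ∑ a, p a = 1) (hq : ∀ a, 0 < q a) :
    -Real.log (∑ a, q a) ≤ ∑ a, if 0 < p a then p a * Real.log (p a / q a) else 0 := by
  set Z := ∑ a, q a with hZ
  have hZpos : 0 < Z := Finset.sum_pos (fun a _ => hq a) Finset.univ_nonempty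
  have hsum1 : ∑ a, (if 0 < p a then p a else 0) = 1 := by
    rw [← hp1]
    apply Finset.sum_congr rfl
    intro a _
    split_ifs with h
    · rfl
    · exact le_antisymm (hp a) (not_lt.mp h)
  have key : ∀ a, (if 0 < p a then p a - q a / Z else 0) - (if 0 < p a then p a else 0) * Real.log Z
      ≤ (if 0 < p a then p a * Real.log (p a / q a) else 0) := by
    intro a
    split_ifs with h
    · have hpa := h
      have hqa := hq a
      have h1 : Real.log (q a / (p a * Z)) ≤ q a / (p a * Z) - 1 :=
        Real.log_le_sub_one_of_pos (by positivity)
      have h2 : Real.log (q a / (p a * Z)) = Real.log (q a) - (Real.log (p a) + Real.log Z) := by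
        rw [Real.log_div (by positivity) (by positivity), Real.log_mul (by positivity) (by positivity)]
      have h3 : Real.log (p a / q a) = Real.log (p a) - Real.log (q a) := by
        rw [Real.log_div (by positivity) (by positivity)]
      have h5 : p a * (q a / (p a * Z)) = q a / Z := by field_simp
      have h6 := mul_le_mul_of_nonneg_left h1 hpa.le
      rw [h2] at h6
      rw [h3]
      nlinarith [h5, h6]
    · simp
  have hA : ∑ a, (if 0 < p a then q a / Z else 0) ≤ 1 := by
    have h1 : ∑ a, (if 0 < p a then q a / Z else 0) ≤ ∑ a, q a / Z := by
      apply Finset.sum_le_sum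
      intro a _
      split_ifs
      · exact le_refl _
      · have := (hq a).le
        positivity
    have h2 : ∑ a, q a / Z = 1 := by
      rw [← Finset.sum_div]
      field_simp
      exact hZ.symm
    linarith
  have hstep := Finset.sum_le_sum (fun a (_ : a ∈ Finset.univ) => key a)
  have hsplit : ∀ a, (if 0 < p a then p a - q a / Z else 0)
      = (if 0 < p a then p a else 0) - (if 0 < p a then q a / Z else 0) := by
    intro a; split_ifs <;> ring
  have hL : ∑ a, ((if 0 < p a then p a - q a / Z else 0) - (if 0 < p a then p a else 0) * Real.log Z)
      = (1 : ℝ) - (∑ a, (if 0 < p a then q a / Z else 0)) - Real.log Z := by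
    simp only [hsplit]
    rw [Finset.sum_sub_distrib, Finset.sum_sub_distrib, ← Finset.sum_mul, hsum1]
    ring
  linarith

noncomputable def Fjoint {𝒳 𝒰 : Type} (T : ℕ) (fx : ℕ → 𝒳 → 𝒰 → 𝒳 → ℝ)
    (fu : ℕ → 𝒳 → 𝒰 → ℝ) (f0 : 𝒳 → ℝ) :
    ((Fin (T + 1) → 𝒳) × (Fin T → 𝒰)) → ℝ :=
  fun t => f0 (t.1 0) * ∏ k : Fin T,
    fx ((k : ℕ) + 1) (t.1 k.castSucc) (t.2 k) (t.1 k.succ) *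
      fu ((k : ℕ) + 1) (t.1 k.castSucc) (t.2 k)

def trajEquiv (𝒳 𝒰 : Type) (T : ℕ) :
    (𝒳 × 𝒰 × ((Fin (T + 1) → 𝒳) × (Fin T → 𝒰))) ≃ ((Fin (T + 2) → 𝒳) × (Fin (T + 1) → 𝒰)) where
  toFun p := (Fin.cons p.1 p.2.2.1, Fin.cons p.2.1 p.2.2.2)
  invFun t := (t.1 0, t.2 0, (Fin.tail t.1, Fin.tail t.2))
  left_inv p := by
    obtain ⟨x, u, xs, us⟩ := p
    simp [Fin.tail_cons]
  right_inv t := by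
    obtain ⟨xs, us⟩ := t
    simp [Fin.cons_self_tail]

lemma Fjoint_cons {𝒳 𝒰 : Type} (T : ℕ) (fx : ℕ → 𝒳 → 𝒰 → 𝒳 → ℝ)
    (fu : ℕ → 𝒳 → 𝒰 → ℝ) (f0 : 𝒳 → ℝ) (x : 𝒳) (u : 𝒰)
    (xs : Fin (T + 1) → 𝒳) (us : Fin T → 𝒰) :
    Fjoint (T + 1) fx fu f0 (Fin.cons x xs, Fin.cons u us)
      = f0 x * fu 1 x u *
        Fjoint T (fun k => fx (k + 1)) (fun k => fu (k + 1)) (fx 1 x u) (xs, us) := by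
  simp only [Fjoint, Fin.prod_univ_succ, Fin.cons_zero, Fin.castSucc_zero, Fin.cons_succ,
    Fin.succ_zero_eq_one, Fin.val_succ, Fin.val_zero]
  have h1 : ∀ k : Fin T, (Fin.cons x xs : Fin (T + 2) → 𝒳) k.succ.castSucc = xs k.castSucc := by
    intro k
    rw [← Fin.succ_castSucc, Fin.cons_succ]
  rw [Finset.prod_congr rfl (fun k (_ : k ∈ Finset.univ) => by rw [h1 k])]
  norm_num
  ring

lemma Fjoint_nonneg {𝒳 𝒰 : Type} [Fintype 𝒳] [Fintype 𝒰] (T : ℕ)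
    {fx : ℕ → 𝒳 → 𝒰 → 𝒳 → ℝ} {fu : ℕ → 𝒳 → 𝒰 → ℝ} {f0 : 𝒳 → ℝ}
    (hfx : ∀ k x u x', 0 ≤ fx k x u x') (hfu : ∀ k x u, 1 ≤ k → k ≤ T → 0 ≤ fu k x u)
    (hf0 : ∀ x, 0 ≤ f0 x) : ∀ t, 0 ≤ Fjoint T fx fu f0 t := by
  intro t
  apply mul_nonneg (hf0 _)
  apply Finset.prod_nonneg
  intro k _
  exact mul_nonneg (hfx _ _ _ _) (hfu _ _ _ (by omega) (by omega))

lemma Fjoint_pos {𝒳 𝒰 : Type} [Fintype 𝒳] [Fintype 𝒰] (T : ℕ)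
    {gx : ℕ → 𝒳 → 𝒰 → 𝒳 → ℝ} {gu : ℕ → 𝒳 → 𝒰 → ℝ} {g0 : 𝒳 → ℝ}
    (hgx : ∀ k x u x', 0 < gx k x u x') (hgu : ∀ k x u, 0 < gu k x u)
    (hg0 : ∀ x, 0 < g0 x) : ∀ t, 0 < Fjoint T gx gu g0 t := by
  intro t
  apply mul_pos (hg0 _)
  apply Finset.prod_pos
  intro k _
  exact mul_pos (hgx _ _ _ _) (hgu _ _ _)

lemma sum_traj_zero {𝒳 𝒰 : Type} [Fintype 𝒳] [Fintype 𝒰] [Nonempty 𝒰]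
    (h : ((Fin 1 → 𝒳) × (Fin 0 → 𝒰)) → ℝ) :
    ∑ t, h t = ∑ x, h (fun _ => x, fun i => i.elim0) := by
  rw [← Equiv.sum_comp
    (⟨fun x => ((fun _ => x, fun i => i.elim0) : (Fin 1 → 𝒳) × (Fin 0 → 𝒰)),
      fun t => t.1 0,
      fun x => rfl,
      fun t => by
        obtain ⟨xs, us⟩ := t
        refine Prod.ext ?_ ?_
        · funext i
          have : i = 0 := Subsingleton.elim i 0
          simp [this]
        · funext i
          exact i.elim0⟩ : 𝒳 ≃ ((Fin 1 → 𝒳) × (Fin 0 → 𝒰))) h]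
  rfl

lemma sum_traj_succ {𝒳 𝒰 : Type} [Fintype 𝒳] [Fintype 𝒰] (T : ℕ)
    (h : ((Fin (T + 2) → 𝒳) × (Fin (T + 1) → 𝒰)) → ℝ) :
    ∑ t, h t = ∑ x, ∑ u, ∑ τ : ((Fin (T + 1) → 𝒳) × (Fin T → 𝒰)),
      h (Fin.cons x τ.1, Fin.cons u τ.2) := by
  rw [← Equiv.sum_comp (trajEquiv 𝒳 𝒰 T) h]
  rw [Fintype.sum_prod_type]
  apply Finset.sum_congr rfl
  intro x _
  rw [Fintype.sum_prod_type]
  apply Finset.sum_congr rfl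
  intro u _
  apply Finset.sum_congr rfl
  intro τ _
  rfl

lemma Fjoint_sum_one {𝒳 𝒰 : Type} [Fintype 𝒳] [Fintype 𝒰] [Nonempty 𝒰] :
    ∀ (T : ℕ) (fx : ℕ → 𝒳 → 𝒰 → 𝒳 → ℝ) (fu : ℕ → 𝒳 → 𝒰 → ℝ) (f0 : 𝒳 → ℝ),
    (∀ k x u, ∑ x', fx k x u x' = 1) →
    (∀ k x, 1 ≤ k → k ≤ T → ∑ u, fu k x u = 1) →
    (∑ x, f0 x = 1) → ∑ t, Fjoint T fx fu f0 t = 1 := by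
  intro T
  induction T with
  | zero =>
    intro fx fu f0 hfx hfu hf0
    rw [sum_traj_zero]
    simpa [Fjoint] using hf0
  | succ T ih =>
    intro fx fu f0 hfx hfu hf0
    rw [sum_traj_succ]
    have : ∀ x u, ∑ τ : ((Fin (T + 1) → 𝒳) × (Fin T → 𝒰)),
        Fjoint (T + 1) fx fu f0 (Fin.cons x τ.1, Fin.cons u τ.2)
        = f0 x * fu 1 x u := by
      intro x u
      have := ih (fun k => fx (k + 1)) (fun k => fu (k + 1)) (fx 1 x u)
        (fun k x u => hfx (k + 1) x u)
        (fun k x hk1 hk2 => hfu (k + 1) x (by omega) (by omega))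
        (hfx 1 x u)
      calc ∑ τ : ((Fin (T + 1) → 𝒳) × (Fin T → 𝒰)),
            Fjoint (T + 1) fx fu f0 (Fin.cons x τ.1, Fin.cons u τ.2)
          = ∑ τ : ((Fin (T + 1) → 𝒳) × (Fin T → 𝒰)), f0 x * fu 1 x u *
            Fjoint T (fun k => fx (k + 1)) (fun k => fu (k + 1)) (fx 1 x u) τ := by
            apply Finset.sum_congr rfl
            intro τ _
            rw [← Fjoint_cons]
        _ = f0 x * fu 1 x u := by
            rw [← Finset.mul_sum, this, mul_one]
    calc ∑ x, ∑ u, ∑ τ : ((Fin (T + 1) → 𝒳) × (Fin T → 𝒰)),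
          Fjoint (T + 1) fx fu f0 (Fin.cons x τ.1, Fin.cons u τ.2)
        = ∑ x, ∑ u, f0 x * fu 1 x u := by
          exact Finset.sum_congr rfl fun x _ => Finset.sum_congr rfl fun u _ => this x u
      _ = 1 := by
          rw [← hf0]
          apply Finset.sum_congr rfl
          intro x _
          rw [← Finset.mul_sum, hfu 1 x (by omega) (by omega), mul_one]

lemma Fjoint_congr_fu {𝒳 𝒰 : Type} (T : ℕ) {fx : ℕ → 𝒳 → 𝒰 → 𝒳 → ℝ}
    {fu fu' : ℕ → 𝒳 → 𝒰 → ℝ} {f0 : 𝒳 → ℝ}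
    (h : ∀ k, 1 ≤ k → k ≤ T → fu k = fu' k) :
    Fjoint T fx fu f0 = Fjoint T fx fu' f0 := by
  funext t
  unfold Fjoint
  congr 1
  apply Finset.prod_congr rfl
  intro k _
  rw [h ((k : ℕ) + 1) (by omega) (by omega)]

noncomputable def fuOpt {𝒳 𝒰 : Type} [Fintype 𝒳] [Fintype 𝒰] (T : ℕ)
    (fx gx : ℕ → 𝒳 → 𝒰 → 𝒳 → ℝ) (gu : ℕ → 𝒳 → 𝒰 → ℝ) : ℕ → 𝒳 → 𝒰 → ℝ :=
  fun k x u => gu k x u * Real.exp (-(KL (fx k x u) (gx k x u) -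
    ∑ x', fx k x u x' * Real.log (gamAux T fx gx gu (T - k) x'))) /
    gamAux T fx gx gu (T - (k - 1)) x

lemma fuOpt_pos {𝒳 𝒰 : Type} [Fintype 𝒳] [Fintype 𝒰] [Nonempty 𝒳] [Nonempty 𝒰] (T : ℕ)
    {fx gx : ℕ → 𝒳 → 𝒰 → 𝒳 → ℝ} {gu : ℕ → 𝒳 → 𝒰 → ℝ}
    (hgu : ∀ k x u, 0 < gu k x u) (k : ℕ) (x : 𝒳) (u : 𝒰) :
    0 < fuOpt T fx gx gu k x u :=
  div_pos (mul_pos (hgu _ _ _) (Real.exp_pos _)) (gamAux_pos hgu _ _)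

lemma fuOpt_sum {𝒳 𝒰 : Type} [Fintype 𝒳] [Fintype 𝒰] [Nonempty 𝒳] [Nonempty 𝒰] (T : ℕ)
    {fx gx : ℕ → 𝒳 → 𝒰 → 𝒳 → ℝ} {gu : ℕ → 𝒳 → 𝒰 → ℝ}
    (hgu : ∀ k x u, 0 < gu k x u) (k : ℕ) (hk1 : 1 ≤ k) (hk2 : k ≤ T) (x : 𝒳) :
    ∑ u, fuOpt T fx gx gu k x u = 1 := by
  unfold fuOpt
  rw [← Finset.sum_div]
  have hγ : 0 < gamAux T fx gx gu (T - (k - 1)) x := gamAux_pos hgu _ _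
  apply div_eq_one_iff_eq (ne_of_gt hγ) |>.mpr
  rw [show T - (k - 1) = (T - k) + 1 by omega]
  show _ = gamAux T fx gx gu ((T - k) + 1) x
  simp only [gamAux]
  rw [show T - (T - k) = k by omega]
  apply Finset.sum_congr rfl
  intro u _
  congr 1
  congr 1
  ring

lemma fuOpt_shift {𝒳 𝒰 : Type} [Fintype 𝒳] [Fintype 𝒰] (T : ℕ)
    {fx gx : ℕ → 𝒳 → 𝒰 → 𝒳 → ℝ} {gu : ℕ → 𝒳 → 𝒰 → ℝ}
    (k : ℕ) (hk1 : 1 ≤ k) (hk2 : k ≤ T) :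
    fuOpt (T + 1) fx gx gu (k + 1)
      = fuOpt T (fun j => fx (j + 1)) (fun j => gx (j + 1)) (fun j => gu (j + 1)) k := by
  funext x u
  unfold fuOpt
  rw [gamAux_shift _ (by omega : T - k ≤ T + 1),
    gamAux_shift _ (by omega : T - (k - 1) ≤ T + 1),
    show T - (k - 1) = T + 1 - (k + 1 - 1) by omega,
    show T - k = T + 1 - (k + 1) by omega]

lemma KL_decomp {𝒳 𝒰 : Type} [Fintype 𝒳] [Fintype 𝒰] [Nonempty 𝒰] (T : ℕ)
    (fx gx : ℕ → 𝒳 → 𝒰 → 𝒳 → ℝ) (gu fu : ℕ → 𝒳 → 𝒰 → ℝ) (f0 g0 : 𝒳 → ℝ)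
    (hfx : ∀ k x u, (∀ x', 0 ≤ fx k x u x') ∧ ∑ x', fx k x u x' = 1)
    (hgx : ∀ k x u, (∀ x', 0 < gx k x u x') ∧ ∑ x', gx k x u x' = 1)
    (hgu : ∀ k x u, 0 < gu k x u)
    (hf0 : ∀ x, 0 ≤ f0 x) (habs : ∀ x, g0 x = 0 → f0 x = 0) (hg0 : ∀ x, 0 ≤ g0 x)
    (hfu : ∀ k x, 1 ≤ k → k ≤ T + 1 → (∀ u, 0 ≤ fu k x u) ∧ ∑ u, fu k x u = 1) :
    KL (Fjoint (T + 1) fx fu f0) (Fjoint (T + 1) gx gu g0)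
      = ∑ x, ∑ u, if 0 < f0 x * fu 1 x u then
          (f0 x * fu 1 x u) * (Real.log ((f0 x * fu 1 x u) / (g0 x * gu 1 x u)) +
            KL (Fjoint T (fun k => fx (k + 1)) (fun k => fu (k + 1)) (fx 1 x u))
               (Fjoint T (fun k => gx (k + 1)) (fun k => gu (k + 1)) (gx 1 x u))) else 0 := by
  rw [KL, sum_traj_succ]
  apply Finset.sum_congr rfl
  intro x _
  apply Finset.sum_congr rfl
  intro u _
  set F' := Fjoint T (fun k => fx (k + 1)) (fun k => fu (k + 1)) (fx 1 x u) with hF'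
  set G' := Fjoint T (fun k => gx (k + 1)) (fun k => gu (k + 1)) (gx 1 x u) with hG'
  set a := f0 x * fu 1 x u with ha
  set b := g0 x * gu 1 x u with hb
  have hFc : ∀ τ : ((Fin (T + 1) → 𝒳) × (Fin T → 𝒰)),
      Fjoint (T + 1) fx fu f0 (Fin.cons x τ.1, Fin.cons u τ.2) = a * F' τ := by
    intro τ
    rw [← Prod.mk.eta (p := τ), Fjoint_cons]
  have hGc : ∀ τ : ((Fin (T + 1) → 𝒳) × (Fin T → 𝒰)),
      Fjoint (T + 1) gx gu g0 (Fin.cons x τ.1, Fin.cons u τ.2) = b * G' τ := by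
    intro τ
    rw [← Prod.mk.eta (p := τ), Fjoint_cons]
  have hanonneg : 0 ≤ a := mul_nonneg (hf0 x) ((hfu 1 x (by omega) (by omega)).1 u)
  by_cases hapos : 0 < a
  · -- positive case
    have hf0x : 0 < f0 x := by
      rcases mul_pos_iff.mp hapos with ⟨h1, _⟩ | ⟨h1, h2⟩
      · exact h1
      · exact absurd h2 (not_lt.mpr ((hfu 1 x (by omega) (by omega)).1 u))
    have hg0x : 0 < g0 x := by
      rcases lt_or_eq_of_le (hg0 x) with h | h
      · exact h
      · exact absurd (habs x h.symm) (by positivity)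
    have hbpos : 0 < b := mul_pos hg0x (hgu 1 x u)
    have hF'nonneg : ∀ τ, 0 ≤ F' τ :=
      Fjoint_nonneg T (fun k x u x' => (hfx (k + 1) x u).1 x')
        (fun k x u h1 h2 => (hfu (k + 1) x (by omega) (by omega)).1 u) (fun x' => (hfx 1 x u).1 x')
    have hG'pos : ∀ τ, 0 < G' τ :=
      Fjoint_pos T (fun k x u x' => (hgx (k + 1) x u).1 x') (fun k x u => hgu (k + 1) x u)
        (fun x' => (hgx 1 x u).1 x')
    have hF'sum : ∑ τ, F' τ = 1 :=
      Fjoint_sum_one T _ _ _ (fun k x u => (hfx (k + 1) x u).2)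
        (fun k x h1 h2 => (hfu (k + 1) x (by omega) (by omega)).2) (hfx 1 x u).2
    have hsum1 : ∑ τ, (if 0 < F' τ then F' τ else 0) = 1 := by
      rw [← hF'sum]
      apply Finset.sum_congr rfl
      intro τ _
      split_ifs with h
      · rfl
      · exact le_antisymm (hF'nonneg τ) (not_lt.mp h)
    have hterm : ∀ τ : ((Fin (T + 1) → 𝒳) × (Fin T → 𝒰)),
        (if 0 < Fjoint (T + 1) fx fu f0 (Fin.cons x τ.1, Fin.cons u τ.2) then
          Fjoint (T + 1) fx fu f0 (Fin.cons x τ.1, Fin.cons u τ.2) *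
            Real.log (Fjoint (T + 1) fx fu f0 (Fin.cons x τ.1, Fin.cons u τ.2) /
              Fjoint (T + 1) gx gu g0 (Fin.cons x τ.1, Fin.cons u τ.2)) else 0)
        = a * Real.log (a / b) * (if 0 < F' τ then F' τ else 0)
          + a * (if 0 < F' τ then F' τ * Real.log (F' τ / G' τ) else 0) := by
      intro τ
      rw [hFc τ, hGc τ]
      by_cases hF : 0 < F' τ
      · rw [if_pos (mul_pos hapos hF), if_pos hF, if_pos hF]
        have hG := hG'pos τ
        have hlog : Real.log (a * F' τ / (b * G' τ))
            = Real.log (a / b) + Real.log (F' τ / G' τ) := by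
          rw [Real.log_div (ne_of_gt (mul_pos hapos hF)) (ne_of_gt (mul_pos hbpos hG)),
            Real.log_div (ne_of_gt hapos) (ne_of_gt hbpos),
            Real.log_div (ne_of_gt hF) (ne_of_gt hG),
            Real.log_mul (ne_of_gt hapos) (ne_of_gt hF),
            Real.log_mul (ne_of_gt hbpos) (ne_of_gt hG)]
          ring
        rw [hlog]
        ring
      · have hF0 : F' τ = 0 := le_antisymm (not_lt.mp hF) (hF'nonneg τ)
        rw [if_neg (by rw [hF0, mul_zero]; exact lt_irrefl 0), if_neg hF, if_neg hF]
        ring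
    rw [Finset.sum_congr rfl (fun τ _ => hterm τ), Finset.sum_add_distrib,
      ← Finset.mul_sum, ← Finset.mul_sum, hsum1, if_pos hapos, KL]
    ring
  · -- a = 0
    have ha0 : a = 0 := le_antisymm (not_lt.mp hapos) hanonneg
    rw [if_neg hapos]
    apply Finset.sum_eq_zero
    intro τ _
    rw [if_neg]
    rw [hFc τ, ha0, zero_mul]
    exact lt_irrefl 0

lemma master {𝒳 𝒰 : Type} [Fintype 𝒳] [Fintype 𝒰] [Nonempty 𝒳] [Nonempty 𝒰] :
    ∀ (T : ℕ) (fx gx : ℕ → 𝒳 → 𝒰 → 𝒳 → ℝ) (gu : ℕ → 𝒳 → 𝒰 → ℝ) (f0 g0 : 𝒳 → ℝ),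
    (∀ k x u, (∀ x', 0 ≤ fx k x u x') ∧ ∑ x', fx k x u x' = 1) →
    (∀ k x u, (∀ x', 0 < gx k x u x') ∧ ∑ x', gx k x u x' = 1) →
    (∀ k x u, 0 < gu k x u) →
    (∀ x, 0 ≤ f0 x) → (∑ x, f0 x = 1) → (∀ x, 0 ≤ g0 x) → (∀ x, g0 x = 0 → f0 x = 0) →
    (∀ fu : ℕ → 𝒳 → 𝒰 → ℝ,
      (∀ k x, 1 ≤ k → k ≤ T → (∀ u, 0 ≤ fu k x u) ∧ ∑ u, fu k x u = 1) →
      KL f0 g0 - ∑ x, f0 x * Real.log (gamAux T fx gx gu T x)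
        ≤ KL (Fjoint T fx fu f0) (Fjoint T gx gu g0)) ∧
    KL (Fjoint T fx (fuOpt T fx gx gu) f0) (Fjoint T gx gu g0)
      = KL f0 g0 - ∑ x, f0 x * Real.log (gamAux T fx gx gu T x) := by
  intro T
  induction T with
  | zero =>
    intro fx gx gu f0 g0 hfx hgx hgu hf0 hf01 hg0 habs
    have hbase : ∀ fu : ℕ → 𝒳 → 𝒰 → ℝ,
        KL (Fjoint 0 fx fu f0) (Fjoint 0 gx gu g0) = KL f0 g0 := by
      intro fu
      rw [KL, sum_traj_zero, KL]
      apply Finset.sum_congr rfl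
      intro x _
      simp [Fjoint]
    have hzero : ∑ x, f0 x * Real.log (gamAux 0 fx gx gu 0 x) = 0 := by
      simp [gamAux]
    rw [hzero, sub_zero]
    exact ⟨fun fu _ => le_of_eq (hbase fu).symm, hbase _⟩
  | succ T ih =>
    intro fx gx gu f0 g0 hfx hgx hgu hf0 hf01 hg0 habs
    set γ1 : 𝒳 → ℝ := gamAux (T + 1) fx gx gu T with hγ1
    set w : 𝒳 → 𝒰 → ℝ := fun x u => KL (fx 1 x u) (gx 1 x u) -
      ∑ x', fx 1 x u x' * Real.log (γ1 x') with hw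
    have hγ0 : ∀ x, gamAux (T + 1) fx gx gu (T + 1) x
        = ∑ u, gu 1 x u * Real.exp (-(w x u)) := by
      intro x
      show (∑ u, gu (T + 1 - T) x u * Real.exp (-(KL (fx (T + 1 - T) x u) (gx (T + 1 - T) x u)) +
        ∑ x', fx (T + 1 - T) x u x' * Real.log (gamAux (T + 1) fx gx gu T x'))) = _
      rw [show T + 1 - T = 1 by omega]
      apply Finset.sum_congr rfl
      intro u _
      congr 1
      congr 1
      rw [hw]
      ring
    have hγ0pos : ∀ x, 0 < gamAux (T + 1) fx gx gu (T + 1) x := fun x => gamAux_pos hgu _ x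
    -- hypotheses for shifted problem
    have hfx' : ∀ k x u, (∀ x', 0 ≤ fx (k + 1) x u x') ∧ ∑ x', fx (k + 1) x u x' = 1 :=
      fun k x u => hfx (k + 1) x u
    have hgx' : ∀ k x u, (∀ x', 0 < gx (k + 1) x u x') ∧ ∑ x', gx (k + 1) x u x' = 1 :=
      fun k x u => hgx (k + 1) x u
    have hgu' : ∀ k x u, 0 < gu (k + 1) x u := fun k x u => hgu (k + 1) x u
    -- one-step analysis, shared by both branches
    have onestep : ∀ (fu : ℕ → 𝒳 → 𝒰 → ℝ), (∀ u x, 0 ≤ fu 1 x u) → (∀ x, ∑ u, fu 1 x u = 1) →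
        ∀ x, 0 < f0 x →
        ∑ u, (if 0 < f0 x * fu 1 x u then
          (f0 x * fu 1 x u) * (Real.log ((f0 x * fu 1 x u) / (g0 x * gu 1 x u)) + w x u) else 0)
        = f0 x * ((∑ u, if 0 < fu 1 x u then fu 1 x u * Real.log (fu 1 x u /
            (gu 1 x u * Real.exp (-(w x u)))) else 0) + Real.log (f0 x / g0 x)) := by
      intro fu hfunn hfus x hx0
      have hg0x : 0 < g0 x := by
        rcases lt_or_eq_of_le (hg0 x) with h | h
        · exact h
        · exact absurd (habs x h.symm) (by positivity)
      have hterm2 : ∀ u, (if 0 < f0 x * fu 1 x u then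
          (f0 x * fu 1 x u) * (Real.log ((f0 x * fu 1 x u) / (g0 x * gu 1 x u)) + w x u) else 0)
          = f0 x * ((if 0 < fu 1 x u then fu 1 x u * Real.log (fu 1 x u /
              (gu 1 x u * Real.exp (-(w x u)))) else 0)
            + (if 0 < fu 1 x u then fu 1 x u else 0) * Real.log (f0 x / g0 x)) := by
        intro u
        by_cases hpu : 0 < fu 1 x u
        · rw [if_pos (mul_pos hx0 hpu), if_pos hpu, if_pos hpu]
          have hguu := hgu 1 x u
          have hq : (0:ℝ) < gu 1 x u * Real.exp (-(w x u)) :=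
            mul_pos hguu (Real.exp_pos _)
          have e1 : Real.log ((f0 x * fu 1 x u) / (g0 x * gu 1 x u))
              = Real.log (f0 x) + Real.log (fu 1 x u) - Real.log (g0 x) - Real.log (gu 1 x u) := by
            rw [Real.log_div (by positivity) (by positivity),
              Real.log_mul (ne_of_gt hx0) (ne_of_gt hpu),
              Real.log_mul (ne_of_gt hg0x) (ne_of_gt hguu)]
            ring
          have e2 : Real.log (fu 1 x u / (gu 1 x u * Real.exp (-(w x u))))
              = Real.log (fu 1 x u) - Real.log (gu 1 x u) + w x u := by
            rw [Real.log_div (ne_of_gt hpu) (ne_of_gt hq),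
              Real.log_mul (ne_of_gt hguu) (ne_of_gt (Real.exp_pos _)), Real.log_exp]
            ring
          have e3 : Real.log (f0 x / g0 x) = Real.log (f0 x) - Real.log (g0 x) :=
            Real.log_div (ne_of_gt hx0) (ne_of_gt hg0x)
          rw [e1, e2, e3]
          ring
        · have hp0 : fu 1 x u = 0 := le_antisymm (not_lt.mp hpu) (hfunn u x)
          rw [if_neg (by rw [hp0, mul_zero]; exact lt_irrefl 0), if_neg hpu, if_neg hpu]
          ring
      rw [Finset.sum_congr rfl (fun u _ => hterm2 u), ← Finset.mul_sum,
        Finset.sum_add_distrib, ← Finset.sum_mul]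
      have hguard : ∑ u, (if 0 < fu 1 x u then fu 1 x u else 0) = 1 := by
        rw [← hfus x]
        apply Finset.sum_congr rfl
        intro u _
        split_ifs with h
        · rfl
        · exact le_antisymm (hfunn u x) (not_lt.mp h)
      rw [hguard, one_mul]
    constructor
    · -- inequality branch
      intro fu hfu
      rw [KL_decomp T fx gx gu fu f0 g0 hfx hgx hgu hf0 habs hg0 hfu]
      have hKL' : ∀ x u, w x u ≤
          KL (Fjoint T (fun k => fx (k + 1)) (fun k => fu (k + 1)) (fx 1 x u))
             (Fjoint T (fun k => gx (k + 1)) (fun k => gu (k + 1)) (gx 1 x u)) := by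
        intro x u
        have habs' : ∀ x', gx 1 x u x' = 0 → fx 1 x u x' = 0 := by
          intro x' h
          exact absurd h (ne_of_gt ((hgx 1 x u).1 x'))
        have := (ih (fun k => fx (k + 1)) (fun k => gx (k + 1)) (fun k => gu (k + 1))
          (fx 1 x u) (gx 1 x u) hfx' hgx' hgu' (hfx 1 x u).1 (hfx 1 x u).2
          (fun x' => ((hgx 1 x u).1 x').le) habs').1
          (fun k => fu (k + 1)) (fun k x hk1 hk2 => hfu (k + 1) x (by omega) (by omega))
        rw [gamAux_shift T (by omega)] at this
        calc w x u = KL (fx 1 x u) (gx 1 x u) -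
            ∑ x', fx 1 x u x' * Real.log (gamAux (T + 1) fx gx gu T x') := by rw [hw]
          _ ≤ _ := this
      have hterm : ∀ x u, (if 0 < f0 x * fu 1 x u then (f0 x * fu 1 x u) *
          (Real.log ((f0 x * fu 1 x u) / (g0 x * gu 1 x u)) + w x u) else 0)
          ≤ (if 0 < f0 x * fu 1 x u then (f0 x * fu 1 x u) *
            (Real.log ((f0 x * fu 1 x u) / (g0 x * gu 1 x u)) +
              KL (Fjoint T (fun k => fx (k + 1)) (fun k => fu (k + 1)) (fx 1 x u))
                 (Fjoint T (fun k => gx (k + 1)) (fun k => gu (k + 1)) (gx 1 x u))) else 0) := by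
        intro x u
        split_ifs with h
        · exact mul_le_mul_of_nonneg_left (add_le_add_right (hKL' x u) _) h.le
        · exact le_refl 0
      have hx : ∀ x, (if 0 < f0 x then f0 x * Real.log (f0 x / g0 x) else 0)
          - f0 x * Real.log (gamAux (T + 1) fx gx gu (T + 1) x)
          ≤ ∑ u, (if 0 < f0 x * fu 1 x u then (f0 x * fu 1 x u) *
            (Real.log ((f0 x * fu 1 x u) / (g0 x * gu 1 x u)) + w x u) else 0) := by
        intro x
        by_cases hx0 : 0 < f0 x
        · rw [onestep fu (fun u x => (hfu 1 x (by omega) (by omega)).1 u)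
            (fun x => (hfu 1 x (by omega) (by omega)).2) x hx0]
          have hq : ∀ u, (0:ℝ) < gu 1 x u * Real.exp (-(w x u)) :=
            fun u => mul_pos (hgu 1 x u) (Real.exp_pos _)
          have hgibbs := gibbs (fun u => fu 1 x u) (fun u => gu 1 x u * Real.exp (-(w x u)))
            (fun u => (hfu 1 x (by omega) (by omega)).1 u)
            (hfu 1 x (by omega) (by omega)).2 hq
          rw [← hγ0 x] at hgibbs
          rw [if_pos hx0]
          nlinarith [mul_le_mul_of_nonneg_left hgibbs (hf0 x)]
        · have hf00 : f0 x = 0 := le_antisymm (not_lt.mp hx0) (hf0 x)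
          have : ∀ u, (if 0 < f0 x * fu 1 x u then (f0 x * fu 1 x u) *
              (Real.log ((f0 x * fu 1 x u) / (g0 x * gu 1 x u)) + w x u) else 0) = 0 := by
            intro u
            rw [if_neg (by rw [hf00, zero_mul]; exact lt_irrefl 0)]
          rw [Finset.sum_congr rfl (fun u _ => this u), Finset.sum_const, smul_zero,
            if_neg hx0, hf00]
          simp
      calc KL f0 g0 - ∑ x, f0 x * Real.log (gamAux (T + 1) fx gx gu (T + 1) x)
          = ∑ x, ((if 0 < f0 x then f0 x * Real.log (f0 x / g0 x) else 0)
            - f0 x * Real.log (gamAux (T + 1) fx gx gu (T + 1) x)) := by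
            rw [KL, Finset.sum_sub_distrib]
        _ ≤ ∑ x, ∑ u, (if 0 < f0 x * fu 1 x u then (f0 x * fu 1 x u) *
            (Real.log ((f0 x * fu 1 x u) / (g0 x * gu 1 x u)) + w x u) else 0) :=
            Finset.sum_le_sum (fun x _ => hx x)
        _ ≤ _ := Finset.sum_le_sum (fun x _ =>
            Finset.sum_le_sum (fun u _ => hterm x u))
    · -- equality branch
      set fo := fuOpt (T + 1) fx gx gu with hfo
      have hfopmf : ∀ k x, 1 ≤ k → k ≤ T + 1 → (∀ u, 0 ≤ fo k x u) ∧ ∑ u, fo k x u = 1 :=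
        fun k x hk1 hk2 => ⟨fun u => (fuOpt_pos (T + 1) hgu k x u).le,
          fuOpt_sum (T + 1) hgu k hk1 hk2 x⟩
      rw [KL_decomp T fx gx gu fo f0 g0 hfx hgx hgu hf0 habs hg0 hfopmf]
      have hKLeq : ∀ x u,
          KL (Fjoint T (fun k => fx (k + 1)) (fun k => fo (k + 1)) (fx 1 x u))
             (Fjoint T (fun k => gx (k + 1)) (fun k => gu (k + 1)) (gx 1 x u)) = w x u := by
        intro x u
        have habs' : ∀ x', gx 1 x u x' = 0 → fx 1 x u x' = 0 := by
          intro x' h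
          exact absurd h (ne_of_gt ((hgx 1 x u).1 x'))
        have hcongr : Fjoint T (fun k => fx (k + 1)) (fun k => fo (k + 1)) (fx 1 x u)
            = Fjoint T (fun k => fx (k + 1))
              (fuOpt T (fun j => fx (j + 1)) (fun j => gx (j + 1)) (fun j => gu (j + 1)))
              (fx 1 x u) := by
          apply Fjoint_congr_fu
          intro k hk1 hk2
          rw [hfo]
          exact fuOpt_shift T k hk1 hk2
        rw [hcongr]
        have := (ih (fun k => fx (k + 1)) (fun k => gx (k + 1)) (fun k => gu (k + 1))
          (fx 1 x u) (gx 1 x u) hfx' hgx' hgu' (hfx 1 x u).1 (hfx 1 x u).2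
          (fun x' => ((hgx 1 x u).1 x').le) habs').2
        rw [gamAux_shift T (by omega)] at this
        rw [this, hw]
      -- the optimal one-step policy is proportional to gu * exp(-w)
      have hfo1 : ∀ x u, fo 1 x u = gu 1 x u * Real.exp (-(w x u)) /
          gamAux (T + 1) fx gx gu (T + 1) x := by
        intro x u
        rw [hfo]
        show gu 1 x u * Real.exp (-(KL (fx 1 x u) (gx 1 x u) -
            ∑ x', fx 1 x u x' * Real.log (gamAux (T + 1) fx gx gu (T + 1 - 1) x'))) /
            gamAux (T + 1) fx gx gu (T + 1 - (1 - 1)) x = _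
        rw [show T + 1 - 1 = T by omega, show T + 1 - (1 - 1) = T + 1 by omega, hw]
      have hx : ∀ x, ∑ u, (if 0 < f0 x * fo 1 x u then
          (f0 x * fo 1 x u) * (Real.log ((f0 x * fo 1 x u) / (g0 x * gu 1 x u)) + w x u) else 0)
          = (if 0 < f0 x then f0 x * Real.log (f0 x / g0 x) else 0)
            - f0 x * Real.log (gamAux (T + 1) fx gx gu (T + 1) x) := by
        intro x
        by_cases hx0 : 0 < f0 x
        · rw [onestep fo (fun u x => (hfopmf 1 x (by omega) (by omega)).1 u)
            (fun x => (hfopmf 1 x (by omega) (by omega)).2) x hx0]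
          have hZ := hγ0pos x
          have hinner : ∀ u, (if 0 < fo 1 x u then fo 1 x u * Real.log (fo 1 x u /
              (gu 1 x u * Real.exp (-(w x u)))) else 0)
              = fo 1 x u * (-Real.log (gamAux (T + 1) fx gx gu (T + 1) x)) := by
            intro u
            have hfopos : 0 < fo 1 x u := fuOpt_pos (T + 1) hgu 1 x u
            rw [if_pos hfopos]
            have hq : (0:ℝ) < gu 1 x u * Real.exp (-(w x u)) :=
              mul_pos (hgu 1 x u) (Real.exp_pos _)
            congr 1
            rw [hfo1 x u, div_div, mul_comm (gamAux (T + 1) fx gx gu (T + 1) x)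
                (gu 1 x u * Real.exp (-(w x u))), ← div_div, div_self (ne_of_gt hq),
              Real.log_div one_ne_zero (ne_of_gt hZ), Real.log_one]
            ring
          rw [Finset.sum_congr rfl (fun u _ => hinner u), ← Finset.sum_mul,
            (hfopmf 1 x (by omega) (by omega)).2, one_mul, if_pos hx0]
          ring
        · have hf00 : f0 x = 0 := le_antisymm (not_lt.mp hx0) (hf0 x)
          have : ∀ u, (if 0 < f0 x * fo 1 x u then (f0 x * fo 1 x u) *
              (Real.log ((f0 x * fo 1 x u) / (g0 x * gu 1 x u)) + w x u) else 0) = 0 := by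
            intro u
            rw [if_neg (by rw [hf00, zero_mul]; exact lt_irrefl 0)]
          rw [Finset.sum_congr rfl (fun u _ => this u), Finset.sum_const, smul_zero,
            if_neg hx0, hf00]
          simp
      have hrw : ∀ x, ∑ u, (if 0 < f0 x * fo 1 x u then
          (f0 x * fo 1 x u) * (Real.log ((f0 x * fo 1 x u) / (g0 x * gu 1 x u)) +
            KL (Fjoint T (fun k => fx (k + 1)) (fun k => fo (k + 1)) (fx 1 x u))
               (Fjoint T (fun k => gx (k + 1)) (fun k => gu (k + 1)) (gx 1 x u))) else 0)
          = ∑ u, (if 0 < f0 x * fo 1 x u then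
          (f0 x * fo 1 x u) * (Real.log ((f0 x * fo 1 x u) / (g0 x * gu 1 x u)) + w x u) else 0) := by
        intro x
        apply Finset.sum_congr rfl
        intro u _
        rw [hKLeq x u]
      rw [Finset.sum_congr rfl (fun x _ => hrw x), Finset.sum_congr rfl (fun x _ => hx x),
        Finset.sum_sub_distrib, ← KL]

/-- optimal solution of the (unconstrained) fully probabilistic design
problem. Trajectories are pairs `t = (x, u)` with `x : Fin (T+1) → 𝒳` the states
`X_0, ..., X_T` and `u : Fin T → 𝒰` the actions `U_1, ..., U_T`; the factor families are
indexed by the time-steps `k ∈ 1:T`. With `γ_T = 1`,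
`γ_k(x) = ∑_u g_{u,k+1}(u|x) exp(-D_KL(f_{x,k+1}(·|x,u)||g_{x,k+1}(·|x,u)) +
∑_{x'} f_{x,k+1}(x'|x,u) ln γ_{k+1}(x'))`,
`ω̂_k(u,x) = D_KL(f_{x,k}(·|x,u)||g_{x,k}(·|x,u)) - ∑_{x'} f_{x,k}(x'|x,u) ln γ_k(x')`, and
`f*_{u,k}(u|x) = g_{u,k}(u|x) exp(-ω̂_k(u,x)) / γ_{k-1}(x)`: each `γ_k` is strictly
positive, each `f*_{u,k}(·|x)` is a pmf, the policy sequence `{f*_{u,k}}` minimizes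
`D_KL(f||g)` over all policy sequences (where `f`, `g` are the joint trajectory pmfs with
shared prior `f_0 = g_0`), and the minimum equals `-∑_{x_0} f_0(x_0) ln γ_0(x_0)`. -/
theorem statement13 {𝒳 𝒰 : Type} [Fintype 𝒳] [Fintype 𝒰] [Nonempty 𝒳] [Nonempty 𝒰]
    (T : ℕ) (hT : 0 < T)
    (fx gx : ℕ → 𝒳 → 𝒰 → 𝒳 → ℝ) (gu : ℕ → 𝒳 → 𝒰 → ℝ) (f0 : 𝒳 → ℝ)
    (hfx : ∀ k x u, (∀ x', 0 ≤ fx k x u x') ∧ ∑ x', fx k x u x' = 1)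
    (hgx : ∀ k x u, (∀ x', 0 < gx k x u x') ∧ ∑ x', gx k x u x' = 1)
    (hgu : ∀ k x, (∀ u, 0 < gu k x u) ∧ ∑ u, gu k x u = 1)
    (hf0 : (∀ x, 0 ≤ f0 x) ∧ ∑ x, f0 x = 1)
    (γ : ℕ → 𝒳 → ℝ) (hγ : ∀ k, γ k = gamAux T fx gx gu (T - k))
    (ωh : ℕ → 𝒰 → 𝒳 → ℝ)
    (hωh : ∀ k u x, ωh k u x =
      KL (fx k x u) (gx k x u) - ∑ x', fx k x u x' * Real.log (γ k x'))
    (fustar : ℕ → 𝒳 → 𝒰 → ℝ)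
    (hfustar : ∀ k x u, fustar k x u = gu k x u * Real.exp (-(ωh k u x)) / γ (k - 1) x)
    (g : ((Fin (T + 1) → 𝒳) × (Fin T → 𝒰)) → ℝ)
    (hg : ∀ t, g t = f0 (t.1 0) * ∏ k : Fin T,
      gx ((k : ℕ) + 1) (t.1 k.castSucc) (t.2 k) (t.1 k.succ) *
        gu ((k : ℕ) + 1) (t.1 k.castSucc) (t.2 k))
    (F : (ℕ → 𝒳 → 𝒰 → ℝ) → ((Fin (T + 1) → 𝒳) × (Fin T → 𝒰)) → ℝ)
    (hF : ∀ fu t, F fu t = f0 (t.1 0) * ∏ k : Fin T,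
      fx ((k : ℕ) + 1) (t.1 k.castSucc) (t.2 k) (t.1 k.succ) *
        fu ((k : ℕ) + 1) (t.1 k.castSucc) (t.2 k)) :
    (∀ k ≤ T, ∀ x, 0 < γ k x) ∧
    (∀ k, 1 ≤ k → k ≤ T → ∀ x, (∀ u, 0 ≤ fustar k x u) ∧ ∑ u, fustar k x u = 1) ∧
    (∀ fu : ℕ → 𝒳 → 𝒰 → ℝ, (∀ k x, (∀ u, 0 ≤ fu k x u) ∧ ∑ u, fu k x u = 1) →
      KL (F fustar) g ≤ KL (F fu) g) ∧
    KL (F fustar) g = -∑ x0, f0 x0 * Real.log (γ 0 x0) := by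
  have hgupos : ∀ k x u, 0 < gu k x u := fun k x u => (hgu k x).1 u
  have hfeq : fustar = fuOpt T fx gx gu := by
    funext k x u
    rw [hfustar, hωh, hγ k, hγ (k - 1)]
    rfl
  have hgeq : g = Fjoint T gx gu f0 := by
    funext t
    rw [hg t]
    rfl
  have hFeq : ∀ fu, F fu = Fjoint T fx fu f0 := by
    intro fu
    funext t
    rw [hF]
    rfl
  have hm := master T fx gx gu f0 f0 hfx hgx hgupos hf0.1 hf0.2 hf0.1 (fun x h => h)
  have hKLff : KL f0 f0 = 0 := by
    rw [KL]
    apply Finset.sum_eq_zero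
    intro x _
    split_ifs with h
    · rw [div_self (ne_of_gt h), Real.log_one, mul_zero]
    · rfl
  refine ⟨?_, ?_, ?_, ?_⟩
  · intro k _ x
    rw [hγ]
    exact gamAux_pos hgupos _ x
  · intro k hk1 hk2 x
    constructor
    · intro u
      rw [hfeq]
      exact (fuOpt_pos T hgupos k x u).le
    · simp only [hfeq]
      exact fuOpt_sum T hgupos k hk1 hk2 x
  · intro fu hfu
    rw [hFeq, hFeq, hgeq, hfeq]
    have h1 := hm.1 fu (fun k x _ _ => hfu k x)
    have h2 := hm.2
    linarith
  · rw [hFeq, hgeq, hfeq, hm.2, hKLff, zero_sub]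
    congr 1
    apply Finset.sum_congr rfl
    intro x _
    rw [hγ 0, Nat.sub_zero]
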